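/- Suppose the augmented system [[C, P̃],[conj(P̃), C*]] [α; conj(α)] = [y; conj(y)] holds with C Hermitian, C and P := C - P̃ C^{-*} conj(P̃) invertible. Then α = P^{-1} y - C^{-1} P̃ P^{-*} conj(y). -/
import Mathlib


open Matrix Complex

theorem stmt_16 (n : ℕ)
    (C Pt : Matrix (Fin n) (Fin n) ℂ)
    (hCherm : C.IsHermitian)
    (Cc Ptc : Matrix (Fin n) (Fin n) ℂ)
    (hCc : Cc = C.map (starRingEnd ℂ)) (hPtc : Ptc = Pt.map (starRingEnd ℂ))
    (hC : IsUnit C.det)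
    (P : Matrix (Fin n) (Fin n) ℂ)
    (hP : P = C - Pt * Cc⁻¹ * Ptc)
    (hPu : IsUnit P.det)
    (Pc : Matrix (Fin n) (Fin n) ℂ) (hPc : Pc = P.map (starRingEnd ℂ))
    (α y : Fin n → ℂ)
    (hsys : (Matrix.fromBlocks C Pt Ptc Cc).mulVec (Sum.elim α (star α)) =
      Sum.elim y (star y)) :
    α = P⁻¹.mulVec y - (C⁻¹ * Pt * Pc⁻¹).mulVec (star y) := by
  set f := starRingEnd ℂ with hf
  -- determinants
  have hdetCc : IsUnit Cc.det := by
    rw [hCc]; exact (f.map_det C) ▸ (hC.map f)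
  have hCCinv : C * C⁻¹ = 1 := Matrix.mul_nonsing_inv _ hC
  have hCcinv : Cc⁻¹ * Cc = 1 := Matrix.nonsing_inv_mul _ hdetCc
  -- conjugation facts
  have hmapmap : ∀ M : Matrix (Fin n) (Fin n) ℂ, (M.map f).map f = M := by
    intro M; ext i j; simp [Matrix.map_apply, hf]
  have hCcinvmap : Cc⁻¹ = C⁻¹.map f := by
    apply Matrix.inv_eq_right_inv
    rw [hCc, ← Matrix.map_mul, hCCinv]
    ext i j
    simp [Matrix.map_apply, Matrix.one_apply, hf]
  have hPcEq : Pc = Cc - Ptc * C⁻¹ * Pt := by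
    rw [hPc, hP, Matrix.map_sub f (map_sub f), Matrix.map_mul, Matrix.map_mul, ← hCc,
      hCcinvmap, hmapmap, ← hPtc, hPtc, hmapmap]
  have hdetPc : IsUnit Pc.det := by
    rw [hPc]; exact (f.map_det P) ▸ (hPu.map f)
  have hPinv : P⁻¹ * P = 1 := Matrix.nonsing_inv_mul _ hPu
  have hPcinv : Pc * Pc⁻¹ = 1 := Matrix.mul_nonsing_inv _ hdetPc
  -- key matrix identity
  have key : P * (C⁻¹ * Pt) = Pt * Cc⁻¹ * Pc := by
    rw [hP, hPcEq]
    simp only [Matrix.sub_mul, Matrix.mul_sub, mul_assoc]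
    rw [← mul_assoc C, hCCinv, one_mul, hCcinv, mul_one]
  have hiden : P⁻¹ * (Pt * Cc⁻¹) = C⁻¹ * Pt * Pc⁻¹ := by
    have key2 : P⁻¹ * (P * (C⁻¹ * Pt)) * Pc⁻¹ = P⁻¹ * (Pt * Cc⁻¹ * Pc) * Pc⁻¹ := by
      rw [key]
    rw [← mul_assoc P⁻¹ P, hPinv, one_mul, ← mul_assoc,
      mul_assoc (P⁻¹ * (Pt * Cc⁻¹)) Pc Pc⁻¹, hPcinv, mul_one] at key2
    exact key2.symm
  -- extract the two equations
  rw [Matrix.fromBlocks_mulVec] at hsys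
  have e1 : C.mulVec α + Pt.mulVec (star α) = y := funext fun i => congrFun hsys (Sum.inl i)
  have e2 : Ptc.mulVec α + Cc.mulVec (star α) = star y := funext fun i => congrFun hsys (Sum.inr i)
  have hs : star α = Cc⁻¹.mulVec (star y - Ptc.mulVec α) := by
    have hCca : Cc.mulVec (star α) = star y - Ptc.mulVec α := by rw [← e2]; abel
    rw [← hCca, Matrix.mulVec_mulVec, hCcinv, Matrix.one_mulVec]
  have ePα : P.mulVec α = y - (Pt * Cc⁻¹).mulVec (star y) := by
    have h := e1
    rw [hs, Matrix.mulVec_mulVec, Matrix.mulVec_sub, Matrix.mulVec_mulVec] at h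
    rw [hP, Matrix.sub_mulVec]
    funext i
    have hi := congrFun h i
    simp only [Pi.add_apply, Pi.sub_apply] at hi ⊢
    linear_combination hi
  have hα : α = P⁻¹.mulVec (P.mulVec α) := by
    rw [Matrix.mulVec_mulVec, hPinv, Matrix.one_mulVec]
  conv_lhs => rw [hα, ePα]
  rw [Matrix.mulVec_sub, Matrix.mulVec_mulVec, hiden]
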